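/- Let L = 𝕃(V ⊕ W ⊕ s(V⊗W)) with the derivations σ_A for A ∈ 𝕃(V ⊕ W). For all A, B ∈ 𝕃(V), the derivations σ_A and σ_B commute in the graded sense: [σ_A, σ_B] = 0 in Der(L); equivalently, σ_A σ_B (X) = (−1)^{(|A|+1)(|B|+1)} σ_B σ_A (X) for every X ∈ L. -/
import Mathlib


universe u

/-- A graded Lie algebra over `ℚ`: a `ℤ`-graded vector space with a bilinear bracket
satisfying graded antisymmetry and the graded Jacobi identity on homogeneous elements. -/
structure GLA (Lc : Type u) [AddCommGroup Lc] [Module ℚ Lc] where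
  grade : ℤ → Submodule ℚ Lc
  internal : DirectSum.IsInternal grade
  br : Lc →ₗ[ℚ] Lc →ₗ[ℚ] Lc
  br_mem : ∀ {i j : ℤ} {x y : Lc}, x ∈ grade i → y ∈ grade j → br x y ∈ grade (i + j)
  antisymm : ∀ {i j : ℤ} {x y : Lc}, x ∈ grade i → y ∈ grade j →
      br x y = -((-1 : ℚ) ^ (i * j) • br y x)
  jacobi : ∀ {i j : ℤ} {x y : Lc} (z : Lc), x ∈ grade i → y ∈ grade j →
      br x (br y z) = br (br x y) z + (-1 : ℚ) ^ (i * j) • br y (br x z)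

namespace GLA

variable {Lc : Type u} [AddCommGroup Lc] [Module ℚ Lc]

/-- The Lie subalgebra (as a submodule closed under the bracket) generated by
a graded family of subspaces. -/
def lieSub (G : GLA Lc) (p : ℤ → Submodule ℚ Lc) : Submodule ℚ Lc :=
  sInf {q | (∀ i, p i ≤ q) ∧ ∀ x ∈ q, ∀ y ∈ q, G.br x y ∈ q}

/-- The submodule of decomposable elements of `L`: the span of all brackets. -/
def dec (G : GLA Lc) : Submodule ℚ Lc :=
  Submodule.span ℚ {x : Lc | ∃ a b : Lc, x = G.br a b}

/-- A graded Lie algebra is reduced if it vanishes in degrees `≤ 0`. -/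
def Reduced (G : GLA Lc) : Prop := ∀ i : ℤ, i ≤ 0 → G.grade i = ⊥

end GLA

namespace S7Aux
variable {Lc : Type u} [AddCommGroup Lc] [Module ℚ Lc]

lemma lieSub_le (G : GLA Lc) {p : ℤ → Submodule ℚ Lc} {q : Submodule ℚ Lc}
    (h1 : ∀ i, p i ≤ q) (h2 : ∀ x ∈ q, ∀ y ∈ q, G.br x y ∈ q) : G.lieSub p ≤ q :=
  sInf_le ⟨h1, h2⟩

lemma le_lieSub (G : GLA Lc) (p : ℤ → Submodule ℚ Lc) (i : ℤ) : p i ≤ G.lieSub p :=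
  le_sInf fun _ hq => hq.1 i

lemma lieSub_br (G : GLA Lc) (p : ℤ → Submodule ℚ Lc) {x y : Lc}
    (hx : x ∈ G.lieSub p) (hy : y ∈ G.lieSub p) : G.br x y ∈ G.lieSub p := by
  rw [GLA.lieSub, Submodule.mem_sInf] at *
  intro q hq
  exact hq.2 x (hx q hq) y (hy q hq)

lemma lieSub_mono (G : GLA Lc) {p p' : ℤ → Submodule ℚ Lc} (h : ∀ i, p i ≤ p' i) :
    G.lieSub p ≤ G.lieSub p' :=
  lieSub_le G (fun i => (h i).trans (le_lieSub G p' i)) (fun _ hx _ hy => lieSub_br G p' hx hy)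

/-- If a linear map `f` satisfies a graded Leibniz rule, maps each generator space `p i`
into a submodule `T` that absorbs brackets with `lieSub p`, then `f` maps all of
`lieSub p` into `T`. -/
lemma main_aux (G : GLA Lc) (f : Lc →ₗ[ℚ] Lc) (c : ℤ → ℚ)
    (p : ℤ → Submodule ℚ Lc) (hp : ∀ i, p i ≤ G.grade i)
    (T : Submodule ℚ Lc)
    (hfd : ∀ {n : ℤ} (x y : Lc), x ∈ G.grade n →
      f (G.br x y) = G.br (f x) y + c n • G.br x (f y))
    (hT : ∀ x ∈ T, ∀ y ∈ G.lieSub p, G.br x y ∈ T)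
    (hT' : ∀ x ∈ G.lieSub p, ∀ y ∈ T, G.br x y ∈ T)
    (hgenT : ∀ i, ∀ x ∈ p i, f x ∈ T) :
    ∀ x ∈ G.lieSub p, f x ∈ T := by
  set s : Set Lc :=
    ⋃ n : ℤ, ((G.grade n ⊓ G.lieSub p ⊓ T.comap f : Submodule ℚ Lc) : Set Lc) with hs
  have hsK : ∀ x ∈ s, x ∈ G.lieSub p ⊓ T.comap f := by
    intro x hx
    rcases Set.mem_iUnion.mp hx with ⟨n, hn⟩
    exact ⟨hn.1.2, hn.2⟩
  set K := Submodule.span ℚ s with hK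
  have hKle : K ≤ G.lieSub p ⊓ T.comap f := Submodule.span_le.mpr hsK
  have hbr_gen : ∀ x ∈ s, ∀ y ∈ s, G.br x y ∈ s := by
    intro x hx y hy
    rcases Set.mem_iUnion.mp hx with ⟨m, hm⟩
    rcases Set.mem_iUnion.mp hy with ⟨n, hn⟩
    apply Set.mem_iUnion.mpr ⟨m + n, ?_⟩
    refine ⟨⟨G.br_mem hm.1.1 hn.1.1, lieSub_br G p hm.1.2 hn.1.2⟩, ?_⟩
    refine Submodule.mem_comap.mpr ?_
    rw [hfd x y hm.1.1]
    exact add_mem (hT _ hm.2 _ hn.1.2) (Submodule.smul_mem _ _ (hT' _ hm.1.2 _ hn.2))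
  have hbrK : ∀ x ∈ K, ∀ y ∈ K, G.br x y ∈ K := by
    intro x hx
    induction hx using Submodule.span_induction with
    | mem x hxs =>
      intro y hy
      induction hy using Submodule.span_induction with
      | mem y hys => exact Submodule.subset_span (hbr_gen x hxs y hys)
      | zero => simp only [map_zero]; exact zero_mem K
      | add y z _ _ ihy ihz => simp only [map_add]; exact add_mem ihy ihz
      | smul r y _ ih => simp only [map_smul]; exact K.smul_mem r ih
    | zero => intro y hy; simp only [map_zero, LinearMap.zero_apply]; exact zero_mem K
    | add x z _ _ ihx ihz =>
      intro y hy; simp only [map_add, LinearMap.add_apply]; exact add_mem (ihx y hy) (ihz y hy)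
    | smul r x _ ih =>
      intro y hy; simp only [map_smul, LinearMap.smul_apply]; exact K.smul_mem r (ih y hy)
  have hle : G.lieSub p ≤ K := by
    apply lieSub_le G ?_ hbrK
    intro i x hx
    apply Submodule.subset_span
    exact Set.mem_iUnion.mpr ⟨i, ⟨⟨hp i hx, le_lieSub G p i hx⟩, hgenT i x hx⟩⟩
  intro x hx
  exact (hKle (hle hx)).2

end S7Aux


open S7Aux in
/-- Lemma 3.6(ii).  In `L = 𝕃(V ⊕ W ⊕ s(V⊗W))` with the derivations
`σ_A`, for all homogeneous `A, B ∈ 𝕃(V)` the derivations `σ_A` and `σ_B` commute in the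
graded sense: `[σ_A, σ_B] = 0` in `Der(L)`, i.e.
`σ_A σ_B (X) = (-1)^{(|A|+1)(|B|+1)} σ_B σ_A (X)` for every `X ∈ L`. -/
theorem statement7
    {Lc : Type u} [AddCommGroup Lc] [Module ℚ Lc] (G : GLA Lc)
    (V W Sp : ℤ → Submodule ℚ Lc)
    -- `V` and `W` are reduced graded vector spaces
    (hVred : ∀ i : ℤ, i ≤ 0 → V i = ⊥) (hWred : ∀ i : ℤ, i ≤ 0 → W i = ⊥)
    (hV : ∀ i, V i ≤ G.grade i) (hW : ∀ i, W i ≤ G.grade i) (hSp : ∀ i, Sp i ≤ G.grade i)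
    -- the suspension `s(v ⊗ w)`, bilinear, of degree `|v|+|w|+1`
    (sus : Lc →ₗ[ℚ] Lc →ₗ[ℚ] Lc)
    (hsus : ∀ {i j : ℤ} {v w : Lc}, v ∈ V i → w ∈ W j → sus v w ∈ Sp (i + j + 1))
    -- `L = 𝕃(V ⊕ W ⊕ s(V ⊗ W))` is generated by `V ⊕ W ⊕ s(V ⊗ W)`
    (hgen : G.lieSub (fun i => V i ⊔ W i ⊔ Sp i) = ⊤)
    -- the derivations `σ_A` for homogeneous `A ∈ 𝕃(V ⊕ W)`: `σ_A` has degree `|A| + 1`,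
    -- `σ_v(w) = s(v⊗w)`, `σ_w(v) = (-1)^{|v||w|} s(v⊗w)`, `σ_v(v') = σ_w(w') = 0`,
    -- `σ_v`, `σ_w` vanish on `s(V⊗W)`, and on generators
    -- `σ_A(v) = (-1)^{|v||A|} σ_v(A)`, `σ_A(w) = (-1)^{|w||A|} σ_w(A)`, `σ_A(s(v⊗w)) = 0`
    (sg : ℤ → Lc → (Lc →ₗ[ℚ] Lc))
    (hsg_grade : ∀ {a : ℤ} {A : Lc}, A ∈ G.lieSub (fun i => V i ⊔ W i) → A ∈ G.grade a →
      ∀ {n : ℤ} {x : Lc}, x ∈ G.grade n → sg a A x ∈ G.grade (n + a + 1))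
    (hsg_der : ∀ {a : ℤ} {A : Lc}, A ∈ G.lieSub (fun i => V i ⊔ W i) → A ∈ G.grade a →
      ∀ {n : ℤ} (x y : Lc), x ∈ G.grade n →
      sg a A (G.br x y) = G.br (sg a A x) y + (-1 : ℚ) ^ ((a + 1) * n) • G.br x (sg a A y))
    (hsg_vw : ∀ {i j : ℤ} {v w : Lc}, v ∈ V i → w ∈ W j → sg i v w = sus v w)
    (hsg_wv : ∀ {i j : ℤ} {v w : Lc}, v ∈ V i → w ∈ W j →
      sg j w v = (-1 : ℚ) ^ (i * j) • sus v w)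
    (hsg_vv : ∀ {i i' : ℤ} {v v' : Lc}, v ∈ V i → v' ∈ V i' → sg i v v' = 0)
    (hsg_ww : ∀ {j j' : ℤ} {w w' : Lc}, w ∈ W j → w' ∈ W j' → sg j w w' = 0)
    (hsg_vS : ∀ {i k : ℤ} {v x : Lc}, v ∈ V i → x ∈ Sp k → sg i v x = 0)
    (hsg_wS : ∀ {j k : ℤ} {w x : Lc}, w ∈ W j → x ∈ Sp k → sg j w x = 0)
    (hsg_Av : ∀ {a : ℤ} {A : Lc}, A ∈ G.lieSub (fun i => V i ⊔ W i) → A ∈ G.grade a →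
      ∀ {i : ℤ} {v : Lc}, v ∈ V i → sg a A v = (-1 : ℚ) ^ (i * a) • sg i v A)
    (hsg_Aw : ∀ {a : ℤ} {A : Lc}, A ∈ G.lieSub (fun i => V i ⊔ W i) → A ∈ G.grade a →
      ∀ {j : ℤ} {w : Lc}, w ∈ W j → sg a A w = (-1 : ℚ) ^ (j * a) • sg j w A)
    (hsg_AS : ∀ {a : ℤ} {A : Lc}, A ∈ G.lieSub (fun i => V i ⊔ W i) → A ∈ G.grade a →
      ∀ {k : ℤ} {x : Lc}, x ∈ Sp k → sg a A x = 0)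
 :
    ∀ {a : ℤ} {A : Lc}, A ∈ G.lieSub V → A ∈ G.grade a →
    ∀ {b : ℤ} {B : Lc}, B ∈ G.lieSub V → B ∈ G.grade b →
      (∀ X : Lc, sg a A (sg b B X) = (-1 : ℚ) ^ ((a + 1) * (b + 1)) • sg b B (sg a A X)) ∧
      (sg a A ∘ₗ sg b B - (-1 : ℚ) ^ ((a + 1) * (b + 1)) • (sg b B ∘ₗ sg a A) = 0) := by
  intro a A hA hAg b B hB hBg
  -- basic sign lemmas
  have hne : (-1 : ℚ) ≠ 0 := by norm_num
  have hadd : ∀ m k : ℤ, (-1 : ℚ) ^ (m + k) = (-1 : ℚ) ^ m * (-1 : ℚ) ^ k :=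
    fun m k => zpow_add₀ hne m k
  -- memberships in the bigger Lie subalgebras
  have hVW : ∀ i, V i ≤ G.lieSub (fun i => V i ⊔ W i) := fun i =>
    (le_sup_left : V i ≤ V i ⊔ W i).trans (le_lieSub G (fun i => V i ⊔ W i) i)
  have hWVW : ∀ i, W i ≤ G.lieSub (fun i => V i ⊔ W i) := fun i =>
    (le_sup_right : W i ≤ V i ⊔ W i).trans (le_lieSub G (fun i => V i ⊔ W i) i)
  have hVle : G.lieSub V ≤ G.lieSub (fun i => V i ⊔ W i) :=
    lieSub_mono G (fun i => (le_sup_left : V i ≤ V i ⊔ W i))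
  have hA' : A ∈ G.lieSub (fun i => V i ⊔ W i) := hVle hA
  have hB' : B ∈ G.lieSub (fun i => V i ⊔ W i) := hVle hB
  -- bottom submodule absorbs brackets
  have hTbot : ∀ (p : ℤ → Submodule ℚ Lc), ∀ x ∈ (⊥ : Submodule ℚ Lc), ∀ y ∈ G.lieSub p,
      G.br x y ∈ (⊥ : Submodule ℚ Lc) := by
    intro p x hx y _
    rw [Submodule.mem_bot] at hx ⊢
    rw [hx]; simp
  have hTbot' : ∀ (p : ℤ → Submodule ℚ Lc), ∀ x ∈ G.lieSub p, ∀ y ∈ (⊥ : Submodule ℚ Lc),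
      G.br x y ∈ (⊥ : Submodule ℚ Lc) := by
    intro p x _ y hy
    rw [Submodule.mem_bot] at hy ⊢
    rw [hy]; simp
  -- Step 1 : σ_v kills lieSub V
  have hv_kill : ∀ {i : ℤ} {v : Lc}, v ∈ V i → ∀ x ∈ G.lieSub V, sg i v x = 0 := by
    intro i v hv
    have h := main_aux G (sg i v) (fun n => (-1 : ℚ) ^ ((i + 1) * n)) V hV ⊥
      (fun x y hx => hsg_der (hVW i hv) (hV i hv) x y hx)
      (hTbot V) (hTbot' V)
      (fun i' x hx => by rw [Submodule.mem_bot]; exact hsg_vv hv hx)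
    intro x hx
    simpa [Submodule.mem_bot] using h x hx
  -- Step 2 : σ_A, σ_B kill V
  have hAv : ∀ {i : ℤ} {v : Lc}, v ∈ V i → sg a A v = 0 := by
    intro i v hv
    rw [hsg_Av hA' hAg hv, hv_kill hv A hA, smul_zero]
  have hBv : ∀ {i : ℤ} {v : Lc}, v ∈ V i → sg b B v = 0 := by
    intro i v hv
    rw [hsg_Av hB' hBg hv, hv_kill hv B hB, smul_zero]
  -- Step 3 : σ_A, σ_B kill lieSub (V ⊔ Sp)
  have hVSgrade : ∀ i, V i ⊔ Sp i ≤ G.grade i := fun i => sup_le (hV i) (hSp i)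
  have hA_kill : ∀ x ∈ G.lieSub (fun i => V i ⊔ Sp i), sg a A x = 0 := by
    have h := main_aux G (sg a A) (fun n => (-1 : ℚ) ^ ((a + 1) * n))
      (fun i => V i ⊔ Sp i) hVSgrade ⊥
      (fun x y hx => hsg_der hA' hAg x y hx)
      (hTbot _) (hTbot' _)
      (fun i x hx => by
        rw [Submodule.mem_bot]
        rcases Submodule.mem_sup.mp hx with ⟨y, hy, z, hz, rfl⟩
        rw [map_add, hAv hy, hsg_AS hA' hAg hz, add_zero])
    intro x hx
    simpa [Submodule.mem_bot] using h x hx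
  have hB_kill : ∀ x ∈ G.lieSub (fun i => V i ⊔ Sp i), sg b B x = 0 := by
    have h := main_aux G (sg b B) (fun n => (-1 : ℚ) ^ ((b + 1) * n))
      (fun i => V i ⊔ Sp i) hVSgrade ⊥
      (fun x y hx => hsg_der hB' hBg x y hx)
      (hTbot _) (hTbot' _)
      (fun i x hx => by
        rw [Submodule.mem_bot]
        rcases Submodule.mem_sup.mp hx with ⟨y, hy, z, hz, rfl⟩
        rw [map_add, hBv hy, hsg_AS hB' hBg hz, add_zero])
    intro x hx
    simpa [Submodule.mem_bot] using h x hx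
  -- Step 4 : σ_w maps lieSub V into lieSub (V ⊔ Sp)
  have hVleVS : G.lieSub V ≤ G.lieSub (fun i => V i ⊔ Sp i) :=
    lieSub_mono G (fun i => (le_sup_left : V i ≤ V i ⊔ Sp i))
  have hw_map : ∀ {j : ℤ} {w : Lc}, w ∈ W j →
      ∀ x ∈ G.lieSub V, sg j w x ∈ G.lieSub (fun i => V i ⊔ Sp i) := by
    intro j w hw
    exact main_aux G (sg j w) (fun n => (-1 : ℚ) ^ ((j + 1) * n)) V hV
      (G.lieSub (fun i => V i ⊔ Sp i))
      (fun x y hx => hsg_der (hWVW j hw) (hW j hw) x y hx)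
      (fun x hx y hy => lieSub_br G _ hx (hVleVS hy))
      (fun x hx y hy => lieSub_br G _ (hVleVS hx) hy)
      (fun i v hv => by
        rw [hsg_wv hv hw]
        exact Submodule.smul_mem _ _
          (le_lieSub G (fun i => V i ⊔ Sp i) (i + j + 1)
            (Submodule.mem_sup_right (hsus hv hw))))
  -- the commutator D
  set ε : ℚ := (-1 : ℚ) ^ ((a + 1) * (b + 1)) with hε
  have hε2 : ε * ε = 1 := by
    rw [hε, ← hadd, show (a + 1) * (b + 1) + (a + 1) * (b + 1) = 2 * ((a + 1) * (b + 1)) by ring,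
      zpow_mul]
    norm_num
  set D : Lc →ₗ[ℚ] Lc := sg a A ∘ₗ sg b B - ε • (sg b B ∘ₗ sg a A) with hD
  -- D satisfies the graded Leibniz rule
  have hDder : ∀ {n : ℤ} (x y : Lc), x ∈ G.grade n →
      D (G.br x y) = G.br (D x) y + (-1 : ℚ) ^ ((a + b + 2) * n) • G.br x (D y) := by
    intro n x y hx
    have s3 : (-1 : ℚ) ^ ((a + 1) * (n + b + 1)) = ε * (-1 : ℚ) ^ ((a + 1) * n) := by
      rw [show (a + 1) * (n + b + 1) = (a + 1) * (b + 1) + (a + 1) * n by ring, hadd, hε]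
    have s5 : (-1 : ℚ) ^ ((b + 1) * (n + a + 1)) = ε * (-1 : ℚ) ^ ((b + 1) * n) := by
      rw [show (b + 1) * (n + a + 1) = (a + 1) * (b + 1) + (b + 1) * n by ring, hadd, hε]
    have s7 : (-1 : ℚ) ^ ((a + b + 2) * n) = (-1 : ℚ) ^ ((a + 1) * n) * (-1 : ℚ) ^ ((b + 1) * n) := by
      rw [show (a + b + 2) * n = (a + 1) * n + (b + 1) * n by ring, hadd]
    simp only [hD, LinearMap.sub_apply, LinearMap.comp_apply, LinearMap.smul_apply]
    rw [hsg_der hB' hBg x y hx, hsg_der hA' hAg x y hx, map_add, map_smul, map_add, map_smul,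
      hsg_der hA' hAg (sg b B x) y (hsg_grade hB' hBg hx),
      hsg_der hA' hAg x (sg b B y) hx,
      hsg_der hB' hBg (sg a A x) y (hsg_grade hA' hAg hx),
      hsg_der hB' hBg x (sg a A y) hx,
      s3, s5, s7]
    simp only [map_sub, map_smul, LinearMap.sub_apply, LinearMap.smul_apply,
      map_add, LinearMap.add_apply]
    rcases mul_self_eq_one_iff.mp hε2 with h | h <;> rw [h] <;> match_scalars <;> ring
  -- D kills all the generators
  have hDgen : ∀ i, ∀ x ∈ V i ⊔ W i ⊔ Sp i, D x ∈ (⊥ : Submodule ℚ Lc) := by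
    intro i x hx
    rw [Submodule.mem_bot]
    rcases Submodule.mem_sup.mp hx with ⟨y, hy, z, hz, rfl⟩
    rcases Submodule.mem_sup.mp hy with ⟨v, hv, w, hw, rfl⟩
    have hDv : D v = 0 := by
      simp only [hD, LinearMap.sub_apply, LinearMap.comp_apply, LinearMap.smul_apply]
      rw [hAv hv, hBv hv, map_zero, map_zero, smul_zero, sub_zero]
    have hDw : D w = 0 := by
      have h1 : sg a A (sg b B w) = 0 := by
        rw [hsg_Aw hB' hBg hw, map_smul, hA_kill _ (hw_map hw B hB), smul_zero]
      have h2 : sg b B (sg a A w) = 0 := by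
        rw [hsg_Aw hA' hAg hw, map_smul, hB_kill _ (hw_map hw A hA), smul_zero]
      simp only [hD, LinearMap.sub_apply, LinearMap.comp_apply, LinearMap.smul_apply]
      rw [h1, h2, smul_zero, sub_zero]
    have hDz : D z = 0 := by
      simp only [hD, LinearMap.sub_apply, LinearMap.comp_apply, LinearMap.smul_apply]
      rw [hsg_AS hA' hAg hz, hsg_AS hB' hBg hz, map_zero, map_zero, smul_zero, sub_zero]
    rw [map_add, map_add, hDv, hDw, hDz, add_zero, add_zero]
  -- D kills everything
  have hD0 : ∀ x : Lc, D x = 0 := by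
    have h := main_aux G D (fun n => (-1 : ℚ) ^ ((a + b + 2) * n))
      (fun i => V i ⊔ W i ⊔ Sp i)
      (fun i => sup_le (sup_le (hV i) (hW i)) (hSp i)) ⊥
      (fun x y hx => hDder x y hx)
      (hTbot _) (hTbot' _) hDgen
    intro x
    have hx : x ∈ G.lieSub (fun i => V i ⊔ W i ⊔ Sp i) := by rw [hgen]; trivial
    simpa [Submodule.mem_bot] using h x hx
  constructor
  · intro X
    have := hD0 X
    simp only [hD, LinearMap.sub_apply, LinearMap.comp_apply, LinearMap.smul_apply] at this
    exact sub_eq_zero.mp this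
  · exact LinearMap.ext fun X => by simpa using hD0 X
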